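/- If s > 1 is an integer with 2^ℓ exactly dividing s−1 for some ℓ > 1, and x > 0 is an integer with 2^u exactly dividing x for some u > 0, then 1 + s + s^2 + ... + s^{x−1} ≡ (1 + 2^{ℓ−1})·x (mod 2^{ℓ+u}). -/

import Mathlib

/-- Lemma 2.1 (first part): if `2^ℓ` exactly divides `s - 1` (with `ℓ > 1`) and `2^u`
exactly divides `x` (with `u > 0`), then
`[x; s] = 1 + s + ⋯ + s^(x-1) ≡ (1 + 2^(ℓ-1)) * x (mod 2^(ℓ+u))`. -/
theorem geom_sum_congr (s : ℤ) (x : ℕ) (ℓ u : ℕ) (hs : 1 < s) (hℓ : 1 < ℓ)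
    (hsdvd : (2 : ℤ) ^ ℓ ∣ s - 1) (hsndvd : ¬ (2 : ℤ) ^ (ℓ + 1) ∣ s - 1)
    (hx : 0 < x) (hu : 0 < u)
    (hxdvd : (2 : ℤ) ^ u ∣ (x : ℤ)) (hxndvd : ¬ (2 : ℤ) ^ (u + 1) ∣ (x : ℤ)) :
    (∑ i ∈ Finset.range x, s ^ i) ≡ (1 + 2 ^ (ℓ - 1)) * (x : ℤ) [ZMOD 2 ^ (ℓ + u)] := by
  obtain ⟨a, rfl⟩ : ∃ a, ℓ = a + 2 := ⟨ℓ - 2, by omega⟩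
  obtain ⟨b, rfl⟩ : ∃ b, u = b + 1 := ⟨u - 1, by omega⟩
  -- decompose s - 1 = 2^(a+2) * m with m odd
  obtain ⟨m, hm⟩ := hsdvd
  have hmodd : Odd m := by
    rcases Int.even_or_odd m with he | ho
    · obtain ⟨m', hm'⟩ := he
      exact absurd ⟨m', by rw [hm, hm']; ring⟩ hsndvd
    · exact ho
  -- decompose x = 2^(b+1) * y with y odd
  have hxdvd' : 2 ^ (b + 1) ∣ x := by
    have h2 := hxdvd
    rwa [show ((2:ℤ)^(b+1)) = ((2^(b+1) : ℕ) : ℤ) by push_cast; ring,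
      Int.natCast_dvd_natCast] at h2
  obtain ⟨y, hy⟩ := hxdvd'
  have hyodd : Odd y := by
    rcases Nat.even_or_odd y with he | ho
    · obtain ⟨y', hy'⟩ := he
      exact absurd (⟨y', by rw [hy, hy']; push_cast; ring⟩ : (2:ℤ)^(b+1+1) ∣ (x:ℤ)) hxndvd
    · exact ho
  -- exact binomial expansion to order 3
  have key : ∀ n : ℕ, ∃ c r : ℤ,
      s ^ n = 1 + (n : ℤ) * (s - 1) + c * (s - 1) ^ 2 + r * (s - 1) ^ 3 ∧
      2 * c = (n : ℤ) * ((n : ℤ) - 1) := by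
    intro n
    induction n with
    | zero => exact ⟨0, 0, by norm_num, by norm_num⟩
    | succ n ih =>
      obtain ⟨c, r, h1, h2⟩ := ih
      refine ⟨c + n, r + c + r * (s - 1), ?_, ?_⟩
      · have hps : s ^ (n + 1) = s ^ n * s := pow_succ s n
        rw [hps, h1]; push_cast; ring
      · push_cast; linear_combination h2
  -- main claim by induction on v
  have main : ∀ v : ℕ, ∀ z : ℕ, Odd z →
      (2:ℤ) ^ (2 * a + v + 5) ∣
        s ^ (2 ^ (v + 1) * z) - 1 - ((2 ^ (v + 1) * z : ℕ) : ℤ) * (s - 1)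
          - 2 ^ (2 * a + v + 4) := by
    intro v
    induction v with
    | zero =>
      intro z hz
      obtain ⟨c, r, h1, h2⟩ := key z
      -- z*(2z-1)*m^2 is odd
      have hoddP : Odd ((z:ℤ) * (2 * (z:ℤ) - 1) * m ^ 2) := by
        refine Odd.mul (Odd.mul ?_ ⟨(z:ℤ) - 1, by ring⟩) (hmodd.pow)
        exact_mod_cast hz
      obtain ⟨k, hk⟩ := hoddP
      refine ⟨k + 2 ^ (a + 1) * m ^ 3 *
        (2 * r + 2 * z * c + (c ^ 2 + 2 * z * r) * (s - 1) + 2 * c * r * (s - 1) ^ 2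
          + r ^ 2 * (s - 1) ^ 3), ?_⟩
      have hpow : s ^ (2 ^ (0 + 1) * z) = (s ^ z) ^ 2 := by
        rw [← pow_mul]; congr 1; ring
      rw [hpow, h1, hm]
      push_cast
      linear_combination ((2:ℤ) ^ (2*a+4) * m^2) * h2 + ((2:ℤ) ^ (2*a+4)) * hk
    | succ v ih =>
      intro z hz
      obtain ⟨k, hk⟩ := ih z hz
      have hB : s ^ (2 ^ (v + 1) * z) =
          1 + ((2 ^ (v + 1) * z : ℕ) : ℤ) * (s - 1) + 2 ^ (2 * a + v + 4)
            + 2 ^ (2 * a + v + 5) * k := by linarith [hk]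
      refine ⟨k + 2 ^ v * ((z:ℤ) * m + 2 ^ (a + 1) + 2 ^ (a + 2) * k) ^ 2, ?_⟩
      have hpow : s ^ (2 ^ (v + 1 + 1) * z) = (s ^ (2 ^ (v + 1) * z)) ^ 2 := by
        rw [← pow_mul]; congr 1; ring
      rw [hpow, hB, hm]
      push_cast
      ring
  -- assemble
  obtain ⟨K, hK⟩ := main b y hyodd
  rw [← hy] at hK
  -- y*m = 2*w + 1
  obtain ⟨w, hw⟩ : ∃ w : ℤ, (y:ℤ) * m = 2 * w + 1 := by
    obtain ⟨y0, hy0⟩ := hyodd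
    obtain ⟨m0, hm0⟩ := hmodd
    exact ⟨2*(y0:ℤ)*m0 + y0 + m0, by rw [hm0, hy0]; push_cast; ring⟩
  have hgeom : (∑ i ∈ Finset.range x, s ^ i) * (s - 1) = s ^ x - 1 := geom_sum_mul s x
  set D : ℤ := (∑ i ∈ Finset.range x, s ^ i) - (1 + 2 ^ (a + 1)) * (x : ℤ) with hD
  have hxt : (2:ℤ) ^ (a + 1) * (x:ℤ) * (s - 1) = 2 ^ (2*a + b + 4) * ((y:ℤ) * m) := by
    rw [hm, hy]; push_cast; ring
  have hDt : D * (s - 1) = 2 ^ (2*a + b + 5) * (K - w) := by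
    rw [hD]
    rw [hw] at hxt
    linear_combination hgeom - hxt + hK
  have hmD : m * D = 2 ^ (a + b + 3) * (K - w) := by
    have hcalc : 2 ^ (a + 2) * (m * D) = 2 ^ (a + 2) * (2 ^ (a + b + 3) * (K - w)) := by
      rw [hm] at hDt
      linear_combination hDt
    exact mul_left_cancel₀ (by positivity) hcalc
  have hdvdD : (2:ℤ) ^ (a + b + 3) ∣ D := by
    have hcop : IsCoprime ((2:ℤ) ^ (a + b + 3)) m := by
      apply IsCoprime.pow_left
      rw [Int.prime_two.coprime_iff_not_dvd]
      exact fun h2 => (Int.not_even_iff_odd.mpr hmodd) ⟨_, h2.choose_spec.trans (two_mul _)⟩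
    exact hcop.dvd_of_dvd_mul_left ⟨K - w, hmD⟩
  have hmod : (∑ i ∈ Finset.range x, s ^ i) ≡ (1 + 2 ^ (a + 1)) * (x : ℤ)
      [ZMOD 2 ^ (a + b + 3)] := by
    rw [Int.modEq_iff_dvd]
    have : (1 + 2 ^ (a + 1)) * (x:ℤ) - (∑ i ∈ Finset.range x, s ^ i) = -D := by
      rw [hD]; ring
    rw [this]
    exact hdvdD.neg_right
  have e1 : a + 2 + (b + 1) = a + b + 3 := by omega
  have e2 : a + 2 - 1 = a + 1 := by omega
  rw [e1, e2]
  exact hmod
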